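/- Let T be a finite multigraph whose edges are each colored red or blue, with red-subgraph R and blue-subgraph B. Every connected component of T is an alternating circuit if and only if d_R(v) = d_B(v) for every vertex v of T. -/

import Mathlib

open SimpleGraph

variable {V : Type*}

/-- The quotient multigraph `H/Q` of a graph by a partition (setoid), with parts adjacent
iff some edge of `H` joins them. -/
def quotGraph (H : SimpleGraph V) (s : Setoid V) : SimpleGraph (Quotient s) where
  Adj x y := x ≠ y ∧ ∃ u v : V, Quotient.mk s u = x ∧ Quotient.mk s v = y ∧ H.Adj u v
  symm := ⟨by rintro x y ⟨h, u, v, hu, hv, ha⟩; exact ⟨h.symm, v, u, hv, hu, ha.symm⟩⟩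
  loopless := ⟨by rintro x ⟨h, _⟩; exact h rfl⟩

/-- `H` connects the partition `Q` if the quotient `H/Q` is connected. -/
def Connects (H : SimpleGraph V) (s : Setoid V) : Prop := (quotGraph H s).Connected

/-- `H` is an `f`-factor of `G`: a spanning subgraph with degree `f v` at each vertex. -/
def IsFFactor (G H : SimpleGraph V) (f : V → ℕ) : Prop :=
  H ≤ G ∧ ∀ v : V, (H.neighborSet v).ncard = f v

/-- A list of edges alternates in color, cyclically (consecutive edges have distinct colors,
including the last/first pair for a closed tour). -/
def AltChain (red : Sym2 V → Prop) (l : List (Sym2 V)) : Prop :=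
  List.Chain' (fun e f => ¬ (red e ↔ red f)) (l ++ l.take 1)

/-- `S` is an alternating circuit: it admits a closed Eulerian tour in which every pair
of consecutive edges have different colors. -/
def IsAlternatingCircuit (S : SimpleGraph V) (red : Sym2 V → Prop) : Prop :=
  letI := Classical.decEq V
  ∃ (v : V) (w : S.Walk v v), w.IsEulerian ∧ AltChain red w.edges

/-- The subgraph of `T` consisting of a single connected component `K`. -/
def compGraph (T : SimpleGraph V) (K : T.ConnectedComponent) : SimpleGraph V where
  Adj u v := T.Adj u v ∧ T.connectedComponentMk u = K
  symm := by
    constructor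
    rintro u v ⟨h, hk⟩
    exact ⟨h.symm, (ConnectedComponent.sound h.symm.reachable).trans hk⟩
  loopless := ⟨by rintro v ⟨h, _⟩; exact h.ne rfl⟩

/-- `S` is a switch on `H`: coloring edges of `S ∩ H` red and edges of `S \ H` blue,
every connected component of `S` is an alternating circuit. -/
def IsSwitch (S H : SimpleGraph V) : Prop :=
  ∀ K : S.ConnectedComponent, IsAlternatingCircuit (compGraph S K) (fun e => e ∈ H.edgeSet)

/-- A minimal alternating circuit: each vertex has at most two red and two blue incident edges. -/
def IsMinimalAC (S : SimpleGraph V) (red : Sym2 V → Prop) : Prop :=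
  IsAlternatingCircuit S red ∧ ∀ v : V,
    {u | S.Adj v u ∧ red s(v, u)}.ncard ≤ 2 ∧ {u | S.Adj v u ∧ ¬ red s(v, u)}.ncard ≤ 2

/-- `Switching(H, T)`: remove the edges of `T ∩ H` from `H` and add the edges of `T \ H`. -/
def switching (H T : SimpleGraph V) : SimpleGraph V where
  Adj u v := (H.Adj u v ∧ ¬ T.Adj u v) ∨ (T.Adj u v ∧ ¬ H.Adj u v)
  symm := by
    constructor
    rintro u v (⟨h1, h2⟩ | ⟨h1, h2⟩)
    · exact Or.inl ⟨h1.symm, fun h => h2 h.symm⟩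
    · exact Or.inr ⟨h1.symm, fun h => h2 h.symm⟩
  loopless := ⟨by rintro v (⟨h, _⟩ | ⟨h, _⟩) <;> exact h.ne rfl⟩

/-- Total weight of the edges of a graph. -/
noncomputable def wt (w : Sym2 V → ℝ) (G : SimpleGraph V) : ℝ := ∑ᶠ e ∈ G.edgeSet, w e


section Kotzig

open List

attribute [local instance] Classical.propDecidable

namespace Kz
variable (red : Sym2 V → Prop)

def alt : Sym2 V → Sym2 V → Prop := fun e f => ¬ (red e ↔ red f)

noncomputable def sg (e : Sym2 V) : ℤ := if red e then 1 else -1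

noncomputable def hs : List (Sym2 V) → ℤ
  | [] => 0
  | e :: _ => sg red e

noncomputable def ls (l : List (Sym2 V)) : ℤ := hs red l.reverse

noncomputable def cnt (s : ℤ) (v : V) (l : List (Sym2 V)) : ℕ :=
  (l.filter (fun e => decide (v ∈ e ∧ sg red e = s))).length

noncomputable def mu (v : V) (l : List (Sym2 V)) : ℤ :=
  (l.map (fun e => if v ∈ e then sg red e else 0)).sum

noncomputable def nn (G : SimpleGraph V) (s : ℤ) (v : V) : ℕ :=
  {e | e ∈ G.edgeSet ∧ v ∈ e ∧ sg red e = s}.ncard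

variable {red}

lemma sg_eq_neg {e f : Sym2 V} (h : alt red e f) : sg red f = - sg red e := by
  by_cases he : red e <;> by_cases hf : red f <;>
    simp [alt, he, hf, sg] at h ⊢

lemma ls_cons {e : Sym2 V} {l : List (Sym2 V)} (h : l ≠ []) :
    ls red (e :: l) = ls red l := by
  unfold ls
  rcases l.eq_nil_or_concat with rfl | ⟨l', x, rfl⟩
  · simp at h
  · simp [hs]

lemma chi {G : SimpleGraph V} : ∀ {a b : V} (w : G.Walk a b),
    List.Chain' (alt red) w.edges → ∀ v : V,
    mu red v w.edges = (if v = a then hs red w.edges else 0) +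
      (if v = b then ls red w.edges else 0) := by
  intro a b w
  induction w with
  | nil => intro _ v; simp [mu, hs, ls]
  | @cons a c b h p ih =>
    intro hch v
    have hac : a ≠ c := h.ne
    have ih' := ih hch.tail v
    rcases hpe : p.edges with _ | ⟨e1, l1⟩
    · have hcb : c = b := by
        apply Walk.eq_of_length_eq_zero
        have := p.length_edges
        rw [hpe] at this; simpa using this.symm
      subst hcb
      simp only [Walk.edges_cons, hpe] at *
      simp only [mu, hs, ls, List.map, List.sum_cons, List.sum_nil, List.reverse_cons,
        List.reverse_nil, List.nil_append, add_zero, Sym2.mem_iff]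
      split_ifs <;> simp_all <;> omega
    · have halt : alt red s(a, c) e1 := by
        have := hch
        unfold List.Chain' at this
        rw [Walk.edges_cons, hpe, List.isChain_cons_cons] at this
        exact this.1
      have hmu : mu red v ((Walk.cons h p).edges) =
          (if v ∈ s(a,c) then sg red s(a,c) else 0) + mu red v p.edges := by
        simp [mu]
      have hhs : hs red ((Walk.cons h p).edges) = sg red s(a,c) := by
        rw [Walk.edges_cons]; rfl
      have hls : ls red ((Walk.cons h p).edges) = ls red p.edges := by
        rw [Walk.edges_cons]; apply ls_cons; rw [hpe]; simp
      have hhs2 : hs red p.edges = - sg red s(a,c) := by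
        rw [hpe]
        show sg red e1 = _
        exact sg_eq_neg halt
      rw [hmu, ih', hhs, hls, hhs2]
      simp only [Sym2.mem_iff]
      split_ifs <;> simp_all <;> omega

lemma sg_one_or (e : Sym2 V) : sg red e = 1 ∨ sg red e = -1 := by
  unfold sg; split_ifs <;> simp

lemma alt_iff {e f : Sym2 V} : alt red e f ↔ sg red f = - sg red e := by
  unfold alt sg; split_ifs <;> simp <;> tauto

lemma mu_eq_cnt (v : V) (l : List (Sym2 V)) :
    mu (red := red) v l = (cnt (red := red) 1 v l : ℤ) - (cnt (red := red) (-1) v l : ℤ) := by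
  induction l with
  | nil => simp [mu, cnt]
  | cons e l ih =>
    rcases sg_one_or (red := red) e with hs | hs <;>
      by_cases hv : v ∈ e <;>
      simp [mu, cnt, List.filter_cons, hv, hs] at ih ⊢ <;> omega

lemma cnt_le_nn [Fintype V] {G : SimpleGraph V} {l : List (Sym2 V)} (hnd : l.Nodup)
    (hsub : ∀ e ∈ l, e ∈ G.edgeSet) (s : ℤ) (v : V) :
    cnt (red := red) s v l ≤ nn (red := red) G s v := by
  classical
  have hfin : {e | e ∈ G.edgeSet ∧ v ∈ e ∧ sg red e = s}.Finite := Set.toFinite _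
  have hnd' : (l.filter (fun e => decide (v ∈ e ∧ sg red e = s))).Nodup := hnd.filter _
  have h1 : cnt (red := red) s v l =
      ((l.filter (fun e => decide (v ∈ e ∧ sg red e = s))).toFinset.card) := by
    rw [List.toFinset_card_of_nodup hnd']; rfl
  rw [h1]
  have : ((l.filter (fun e => decide (v ∈ e ∧ sg red e = s))).toFinset : Set (Sym2 V)) ⊆
      {e | e ∈ G.edgeSet ∧ v ∈ e ∧ sg red e = s} := by
    intro e he
    simp only [List.coe_toFinset, List.mem_filter, Set.mem_setOf_eq] at he
    obtain ⟨hel, hp⟩ := he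
    simp only [decide_eq_true_eq] at hp
    exact ⟨hsub e hel, hp⟩
  calc _ = ((l.filter _).toFinset : Set (Sym2 V)).ncard := by
        rw [Set.ncard_coe_finset]
    _ ≤ _ := Set.ncard_le_ncard this hfin

lemma exists_unused [Fintype V] {G : SimpleGraph V} {l : List (Sym2 V)} (hnd : l.Nodup)
    (hsub : ∀ e ∈ l, e ∈ G.edgeSet) {s : ℤ} {v : V}
    (hlt : cnt (red := red) s v l < nn (red := red) G s v) :
    ∃ u : V, G.Adj v u ∧ sg red s(v, u) = s ∧ s(v, u) ∉ l := by
  classical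
  by_contra hcon
  push_neg at hcon
  have hss : {e | e ∈ G.edgeSet ∧ v ∈ e ∧ sg red e = s} ⊆
      {e | e ∈ (l.filter (fun e => decide (v ∈ e ∧ sg red e = s)))} := by
    rintro e ⟨he, hv, hsg⟩
    obtain ⟨u, rfl⟩ := Sym2.mem_iff_exists.mp hv
    have hadj : G.Adj v u := G.mem_edgeSet.mp he
    have hmem : s(v,u) ∈ l := hcon u hadj hsg
    simp only [Set.mem_setOf_eq, List.mem_filter, decide_eq_true_eq]
    exact ⟨hmem, hv, hsg⟩
  have := Set.ncard_le_ncard hss (List.finite_toSet _)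
  have h2 : {e | e ∈ (l.filter (fun e => decide (v ∈ e ∧ sg red e = s)))}.ncard =
      cnt (red := red) s v l := by
    have hnd' : (l.filter (fun e => decide (v ∈ e ∧ sg red e = s))).Nodup := hnd.filter _
    have : {e | e ∈ (l.filter (fun e => decide (v ∈ e ∧ sg red e = s)))} =
        ((l.filter (fun e => decide (v ∈ e ∧ sg red e = s))).toFinset : Set (Sym2 V)) := by
      simp
    rw [this, Set.ncard_coe_finset, List.toFinset_card_of_nodup hnd']; rfl
  rw [h2] at this
  have h3 : nn (red := red) G s v = {e | e ∈ G.edgeSet ∧ v ∈ e ∧ sg red e = s}.ncard := rfl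
  rw [h3] at hlt
  omega

lemma hs_eq' {l : List (Sym2 V)} (h : l ≠ []) : hs red l = sg red (l.head h) := by
  cases l with
  | nil => simp at h
  | cons e l => rfl

lemma ls_eq' {l : List (Sym2 V)} (h : l ≠ []) : ls red l = sg red (l.getLast h) := by
  rcases l.eq_nil_or_concat with rfl | ⟨l', x, rfl⟩
  · simp at h
  · simp only [List.concat_eq_append]
    unfold ls
    rw [List.reverse_append]
    simp only [List.reverse_cons, List.reverse_nil, List.nil_append, List.singleton_append]
    rw [hs_eq' (by simp)]
    simp [List.getLast_append]

lemma altChain_iff {l : List (Sym2 V)} (h : l ≠ []) :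
    AltChain red l ↔ List.Chain' (alt red) l ∧ alt red (l.getLast h) (l.head h) := by
  cases l with
  | nil => simp at h
  | cons e l' =>
    show List.Chain' (alt red) ((e :: l') ++ [e]) ↔ _
    unfold List.Chain'
    rw [List.isChain_append]
    constructor
    · rintro ⟨h1, _, h3⟩
      refine ⟨h1, h3 _ ?_ e rfl⟩
      rw [List.getLast?_eq_getLast (by simp)]
      rfl
    · rintro ⟨h1, h2⟩
      refine ⟨h1, List.isChain_singleton e, ?_⟩
      intro x hx y hy
      rw [List.getLast?_eq_getLast (by simp)] at hx
      simp at hy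
      subst hy
      rw [Option.mem_some_iff] at hx
      subst hx
      exact h2

lemma exists_closed_trail [Fintype V] {G : SimpleGraph V}
    (hbal : ∀ v, nn red  G 1 v = nn red  G (-1) v)
    {a x : V} (hax : G.Adj a x) :
    ∃ w : G.Walk a a, w.IsTrail ∧ AltChain red w.edges ∧ w.edges ≠ [] := by
  classical
  set P : ℕ → Prop := fun n => ∃ b, ∃ w : G.Walk a b, w.IsTrail ∧
    List.Chain' (alt red) w.edges ∧ w.edges ≠ [] ∧ w.length = n with hPdef
  have hbound : ∀ n, P n → n ≤ Fintype.card (Sym2 V) := by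
    rintro n ⟨b, w, ht, _, _, hlen⟩
    have h1 : w.edges.length = w.length := w.length_edges
    have := ht.edges_nodup.length_le_card
    omega
  have hP1 : P 1 := by
    refine ⟨x, Walk.cons hax Walk.nil, ⟨by simp⟩, List.isChain_singleton _, by simp, by simp⟩
  set N := Nat.findGreatest P (Fintype.card (Sym2 V)) with hN
  have hPN : P N := Nat.findGreatest_spec (hbound 1 hP1) hP1
  have hmax : ¬ P (N + 1) := by
    by_cases hle : N + 1 ≤ Fintype.card (Sym2 V)
    · exact Nat.findGreatest_is_greatest (Nat.lt_succ_self N) hle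
    · intro hP; exact hle (hbound _ hP)
  obtain ⟨b, w, ht, hch, hne, hlen⟩ := hPN
  have hsub : ∀ e ∈ w.edges, e ∈ G.edgeSet := fun e he => w.edges_subset_edgeSet he
  have hnd := ht.edges_nodup
  -- extension step
  have hext : ∀ u : V, G.Adj b u → sg red s(b,u) = - ls red w.edges →
      s(b,u) ∉ w.edges → False := by
    intro u hadj hsg hnotin
    apply hmax
    refine ⟨u, w.concat hadj, ⟨?_⟩, ?_, ?_, ?_⟩
    · rw [Walk.edges_concat, List.concat_eq_append]
      exact List.Nodup.append hnd (by simp) (by simpa using hnotin)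
    · unfold List.Chain'
      rw [Walk.edges_concat, List.concat_eq_append, List.isChain_append]
      refine ⟨hch, List.isChain_singleton _, ?_⟩
      intro e1 he1 e2 he2
      rw [List.getLast?_eq_getLast hne] at he1
      simp at he2
      subst he2
      rw [Option.mem_some_iff] at he1
      subst he1
      rw [alt_iff, hsg, ls_eq' hne]
    · simp [Walk.edges_concat]
    · rw [Walk.length_concat, hlen]
  -- find an unused edge of sign s at b, provided cnt bound
  have hfind : ∀ s : ℤ, cnt red  s b w.edges < nn red  G s b →
      s = - ls red w.edges → False := by
    intro s hlt hsgn
    obtain ⟨u, hadj, hsg, hnotin⟩ := exists_unused hnd hsub hlt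
    exact hext u hadj (by rw [hsg, hsgn]) hnotin
  have hmub := chi w hch b
  rw [if_pos rfl, mu_eq_cnt] at hmub
  have hcR := cnt_le_nn (red := red) hnd hsub 1 b
  have hcB := cnt_le_nn (red := red) hnd hsub (-1) b
  have hbalb := hbal b
  have hlsor := (sg_one_or (red := red)  (w.edges.getLast hne))
  rw [← ls_eq' hne] at hlsor
  have hba : b = a := by
    by_contra hba
    rw [if_neg hba] at hmub
    rcases hlsor with hls | hls
    · rw [hls] at hmub
      refine hfind (-1) ?_ (by rw [hls]; try ring)
      omega
    · rw [hls] at hmub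
      refine hfind 1 ?_ (by rw [hls]; try ring)
      omega
  subst hba
  rw [if_pos rfl] at hmub
  have hhsor := (sg_one_or (red := red)  (w.edges.head hne))
  rw [← hs_eq' hne] at hhsor
  have hopp : hs red w.edges = - ls red w.edges := by
    rcases hhsor with hh | hh <;> rcases hlsor with hl | hl <;> rw [hh, hl] at hmub ⊢ <;>
      try ring
    · exfalso; refine hfind (-1) ?_ (by rw [hl]; try ring); omega
    · exfalso; refine hfind 1 ?_ (by rw [hl]; try ring); omega
  refine ⟨w, ht, ?_, hne⟩
  rw [altChain_iff hne]
  refine ⟨hch, ?_⟩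
  rw [alt_iff, ← hs_eq' hne, ← ls_eq' hne, hopp]

lemma altChain_chain' {l : List (Sym2 V)} (h : AltChain red l) :
    List.Chain' (alt red) l := by
  rcases l with _ | ⟨e, l'⟩
  · exact List.isChain_nil
  · exact ((altChain_iff (by simp)).mp h).1

lemma altChain_lastHead {l : List (Sym2 V)} (hne : l ≠ []) (h : AltChain red l) :
    alt red (l.getLast hne) (l.head hne) := ((altChain_iff hne).mp h).2

lemma altChain_reverse {l : List (Sym2 V)} (h : AltChain red l) :
    AltChain red l.reverse := by
  rcases l.eq_nil_or_concat with rfl | ⟨l', x, hl⟩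
  · simpa using h
  · have hne : l ≠ [] := by rw [hl]; simp
    have hner : l.reverse ≠ [] := by simpa using hne
    rw [altChain_iff hner]
    obtain ⟨h1, h2⟩ := (altChain_iff hne).mp h
    constructor
    · unfold List.Chain'
      rw [List.isChain_reverse]
      exact h1.imp (fun {e f} hef h2 => hef h2.symm)
    · rw [List.getLast_reverse, List.head_reverse]
      exact fun hh => h2 hh.symm

lemma cyc_glue {t d ev : List (Sym2 V)} (hW : AltChain red (t ++ d)) (hne : t ++ d ≠ [])
    (hEv : AltChain red ev) (hnev : ev ≠ [])
    (hdt : d ++ t ≠ []) 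
    (hcol : red (ev.head hnev) ↔ red ((d ++ t).head hdt)) :
    AltChain red (t ++ ev ++ d) := by
  have hchW := altChain_chain' hW
  have hlhW := altChain_lastHead hne hW
  have hchv := altChain_chain' hEv
  have hlhv := altChain_lastHead hnev hEv
  obtain ⟨hct, hcd, hjW⟩ := List.isChain_append.mp hchW
  rcases eq_or_ne t [] with rfl | hnt
  · -- t = [], so d = W.edges
    simp only [List.nil_append] at *
    rw [altChain_iff (by simp [hnev])]
    constructor
    · unfold List.Chain'
      rw [List.isChain_append]
      refine ⟨hchv, hcd, ?_⟩
      intro x hx y hy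
      rcases eq_or_ne d [] with rfl | hnd
      · simp at hy
      rw [List.getLast?_eq_getLast hnev, Option.mem_some_iff] at hx
      rw [List.head?_eq_head hnd, Option.mem_some_iff] at hy
      subst hx; subst hy
      rw [List.head_append_left hnd] at hcol
      unfold alt at hlhv ⊢
      tauto
    · rcases eq_or_ne d [] with rfl | hnd
      · simp at hne
      rw [List.getLast_append_right hnd, List.head_append_left hnev]
      rw [List.head_append_left hnd] at hcol
      unfold alt at hlhW ⊢
      tauto
  · rcases eq_or_ne d [] with rfl | hnd
    · -- d = []
      simp only [List.append_nil] at *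
      rw [altChain_iff (by simp [hnt])]
      constructor
      · unfold List.Chain'
        rw [List.isChain_append]
        refine ⟨hct, hchv, ?_⟩
        intro x hx y hy
        rw [List.getLast?_eq_getLast hnt, Option.mem_some_iff] at hx
        rw [List.head?_eq_head hnev, Option.mem_some_iff] at hy
        subst hx; subst hy
        unfold alt at hlhW ⊢
        tauto
      · rw [List.getLast_append_right hnev, List.head_append_left hnt]
        unfold alt at hlhv ⊢
        tauto
    · -- both nonempty
      have hjunc : alt red (t.getLast hnt) (d.head hnd) := by
        have := hjW (t.getLast hnt) (by rw [List.getLast?_eq_getLast hnt]; rfl)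
          (d.head hnd) (by rw [List.head?_eq_head hnd]; rfl)
        exact this
      rw [List.head_append_left hnd] at hcol
      rw [altChain_iff (by simp [hnt])]
      constructor
      · unfold List.Chain'
        rw [List.append_assoc, List.isChain_append]
        refine ⟨hct, ?_, ?_⟩
        · rw [List.isChain_append]
          refine ⟨hchv, hcd, ?_⟩
          intro x hx y hy
          rw [List.getLast?_eq_getLast hnev, Option.mem_some_iff] at hx
          rw [List.head?_eq_head hnd, Option.mem_some_iff] at hy
          subst hx; subst hy
          unfold alt at hlhv ⊢
          tauto
        · intro x hx y hy
          rw [List.getLast?_eq_getLast hnt, Option.mem_some_iff] at hx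
          rw [List.head?_eq_head (by simp [hnev]) , Option.mem_some_iff] at hy
          subst hx; subst hy
          rw [List.head_append_left hnev]
          unfold alt at hjunc ⊢
          tauto
      · rw [List.getLast_append_right hnd]
        rw [List.head_append_left (by simp [hnt] : t ++ ev ≠ []), List.head_append_left hnt]
        have : (t ++ d).getLast hne = d.getLast hnd := List.getLast_append_right hnd
        rw [this] at hlhW
        have : (t ++ d).head hne = t.head hnt := List.head_append_left hnt
        rw [this] at hlhW
        exact hlhW

lemma splice {G : SimpleGraph V} {a v : V} (W : G.Walk a a) (ht : W.IsTrail)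
    (hA : AltChain red W.edges) (hne : W.edges ≠ []) (hv : v ∈ W.support)
    (Wv : G.Walk v v) (htv : Wv.IsTrail) (hAv : AltChain red Wv.edges)
    (hnev : Wv.edges ≠ []) (hdisj : ∀ e ∈ Wv.edges, e ∉ W.edges) :
    ∃ W2 : G.Walk a a, W2.IsTrail ∧ AltChain red W2.edges ∧
      ∀ e, e ∈ W2.edges ↔ (e ∈ W.edges ∨ e ∈ Wv.edges) := by
  classical
  set t := W.takeUntil v hv with hts
  set d := W.dropUntil v hv with hds
  have hspec : t.append d = W := W.take_spec hv
  have hedges : t.edges ++ d.edges = W.edges := by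
    conv_rhs => rw [← hspec]
    rw [Walk.edges_append]
  have hdtne : d.edges ++ t.edges ≠ [] := by
    intro hcon
    apply hne
    rw [← hedges]
    have h1 : d.edges = [] ∧ t.edges = [] := by simpa using hcon
    rw [h1.1, h1.2]
    rfl
  set c0 : Prop := red ((d.edges ++ t.edges).head hdtne) with hc0
  obtain ⟨Wv', htv', hAv', hnev', hsame, hcol⟩ :
      ∃ Wv' : G.Walk v v, Wv'.IsTrail ∧ AltChain red Wv'.edges ∧ Wv'.edges ≠ [] ∧
        (∀ e, e ∈ Wv'.edges ↔ e ∈ Wv.edges) ∧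
        ∀ (h : Wv'.edges ≠ []), (red (Wv'.edges.head h) ↔ c0) := by
    by_cases hor : red (Wv.edges.head hnev) ↔ c0
    · exact ⟨Wv, htv, hAv, hnev, fun e => Iff.rfl, fun h => hor⟩
    · refine ⟨Wv.reverse, Walk.IsTrail.reverse _ htv, ?_, ?_, ?_, ?_⟩
      · rw [Walk.edges_reverse]; exact altChain_reverse hAv
      · rw [Walk.edges_reverse]; simpa using hnev
      · intro e; rw [Walk.edges_reverse]; simp
      · intro h
        have hE : Wv.reverse.edges = Wv.edges.reverse := Wv.edges_reverse
        have h2 : Wv.edges.reverse ≠ [] := by rw [← hE]; exact h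
        have hh : Wv.reverse.edges.head h = Wv.edges.getLast hnev := by
          have h3 : Wv.reverse.edges.head h = Wv.edges.reverse.head h2 := by congr 1
          rw [h3, List.head_reverse]
        rw [hh]
        have := altChain_lastHead hnev hAv
        unfold alt at this
        tauto
  refine ⟨t.append (Wv'.append d), ?_, ?_, ?_⟩
  · constructor
    have he2 : (t.append (Wv'.append d)).edges = t.edges ++ (Wv'.edges ++ d.edges) := by
      simp [Walk.edges_append]
    rw [he2]
    have hWnd : (t.edges ++ d.edges).Nodup := by rw [hedges]; exact ht.edges_nodup
    rw [List.nodup_append] at hWnd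
    obtain ⟨hnt, hnd, hdis⟩ := hWnd
    have hvnd : Wv'.edges.Nodup := htv'.edges_nodup
    have hdisj' : ∀ e ∈ Wv'.edges, e ∉ W.edges := by
      intro e he
      exact hdisj e ((hsame e).mp he)
    rw [List.nodup_append]
    refine ⟨hnt, ?_, ?_⟩
    · rw [List.nodup_append]
      refine ⟨hvnd, hnd, ?_⟩
      intro e he
      have := hdisj' e he
      rw [← hedges] at this
      simp only [List.mem_append] at this
      intro b hb hcontra; subst hcontra
      tauto
    · intro e he b hmem hcontra; subst hcontra
      rcases List.mem_append.mp hmem with hev | hed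
      · exact (hdisj' e hev) (by rw [← hedges]; simp [he])
      · exact hdis e he e hed rfl
  · have he2 : (t.append (Wv'.append d)).edges = (t.edges ++ Wv'.edges) ++ d.edges := by
      simp [Walk.edges_append]
    rw [he2]
    apply cyc_glue (by rw [hedges]; exact hA) (by rw [hedges]; exact hne) hAv' hnev' hdtne
    exact hcol hnev'
  · intro e
    have he2 : (t.append (Wv'.append d)).edges = t.edges ++ (Wv'.edges ++ d.edges) := by
      simp [Walk.edges_append]
    rw [he2]
    have hW : e ∈ W.edges ↔ e ∈ t.edges ∨ e ∈ d.edges := by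
      rw [← hedges]; simp
    simp only [List.mem_append]
    rw [hW, hsame e]
    tauto

lemma mu_closed_zero {G : SimpleGraph V} {a : V} (w : G.Walk a a)
    (hA : AltChain red w.edges) (v : V) : mu red v w.edges = 0 := by
  have hch := altChain_chain' hA
  have := chi w hch v
  rcases eq_or_ne w.edges [] with hne | hne
  · simp [mu, hne]
  · have hlh := altChain_lastHead hne hA
    rw [alt_iff] at hlh
    rw [this, hs_eq' hne, ls_eq' hne]
    split_ifs with h
    · rw [hlh]; ring
    · ring

lemma cnt_closed_eq {G : SimpleGraph V} {a : V} (w : G.Walk a a)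
    (hA : AltChain red w.edges) (v : V) :
    cnt red 1 v w.edges = cnt red (-1) v w.edges := by
  have h := mu_closed_zero w hA v
  rw [mu_eq_cnt] at h
  omega

lemma cnt_eq_ncard {l : List (Sym2 V)} (hnd : l.Nodup) (s : ℤ) (v : V) :
    cnt red s v l = {e | e ∈ l ∧ v ∈ e ∧ sg red e = s}.ncard := by
  classical
  have hnd' : (l.filter (fun e => decide (v ∈ e ∧ sg red e = s))).Nodup := hnd.filter _
  have h1 : {e | e ∈ l ∧ v ∈ e ∧ sg red e = s} =
      ((l.filter (fun e => decide (v ∈ e ∧ sg red e = s))).toFinset : Set (Sym2 V)) := by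
    ext e
    simp [List.mem_filter, decide_eq_true_eq]
  rw [h1, Set.ncard_coe_finset, List.toFinset_card_of_nodup hnd']
  rfl

lemma nn_delete [Fintype V] {G : SimpleGraph V} {l : List (Sym2 V)} (hnd : l.Nodup)
    (hsub : ∀ e ∈ l, e ∈ G.edgeSet) (s : ℤ) (v : V) :
    nn red (G.deleteEdges {e | e ∈ l}) s v + cnt red s v l = nn red G s v := by
  classical
  rw [cnt_eq_ncard hnd]
  have hsplit : {e | e ∈ G.edgeSet ∧ v ∈ e ∧ sg red e = s} =
      {e | e ∈ (G.deleteEdges {e | e ∈ l}).edgeSet ∧ v ∈ e ∧ sg red e = s} ∪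
      {e | e ∈ l ∧ v ∈ e ∧ sg red e = s} := by
    ext e
    simp only [Set.mem_union, Set.mem_setOf_eq, edgeSet_deleteEdges, Set.mem_diff,
      Set.mem_setOf_eq]
    constructor
    · rintro ⟨he, hv, hsg⟩
      by_cases hel : e ∈ l
      · exact Or.inr ⟨hel, hv, hsg⟩
      · exact Or.inl ⟨⟨he, hel⟩, hv, hsg⟩
    · rintro (⟨⟨he, _⟩, hv, hsg⟩ | ⟨hel, hv, hsg⟩)
      · exact ⟨he, hv, hsg⟩
      · exact ⟨hsub e hel, hv, hsg⟩
  have hdisj : Disjoint {e | e ∈ (G.deleteEdges {e | e ∈ l}).edgeSet ∧ v ∈ e ∧ sg red e = s}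
      {e | e ∈ l ∧ v ∈ e ∧ sg red e = s} := by
    rw [Set.disjoint_left]
    rintro e ⟨he, _, _⟩ ⟨hel, _, _⟩
    rw [edgeSet_deleteEdges] at he
    exact he.2 hel
  have h2 := congrArg Set.ncard hsplit
  rw [Set.ncard_union_eq hdisj (Set.toFinite _) (Set.toFinite _)] at h2
  exact h2.symm

lemma find_attach {G : SimpleGraph V} {a : V} (W : G.Walk a a) :
    ∀ {x u : V} (p : G.Walk x u), x ∈ W.support →
    (∃ z, G.Adj u z ∧ s(u, z) ∉ W.edges) →
    ∃ y, y ∈ W.support ∧ ∃ z, G.Adj y z ∧ s(y, z) ∉ W.edges := by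
  intro x u p
  induction p with
  | nil => exact fun hx hu => ⟨_, hx, hu⟩
  | @cons x c u h q ih =>
    intro hx hu
    by_cases hmem : s(x, c) ∈ W.edges
    · exact ih (W.snd_mem_support_of_mem_edges hmem) hu
    · exact ⟨x, hx, c, h, hmem⟩

lemma reachable_of_mem_support {G : SimpleGraph V} {a b v : V} (w : G.Walk a b)
    (hv : v ∈ w.support) : G.Reachable a v := ⟨w.takeUntil v hv⟩

lemma edgeSet_lt [Fintype V] {G : SimpleGraph V} {l : List (Sym2 V)} (hne : l ≠ [])
    (hsub : ∀ e ∈ l, e ∈ G.edgeSet) :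
    (G.deleteEdges {e | e ∈ l}).edgeSet.ncard < G.edgeSet.ncard := by
  apply Set.ncard_lt_ncard _ (Set.toFinite _)
  rw [edgeSet_deleteEdges]
  constructor
  · exact Set.diff_subset
  · intro hsub2
    have hhead : l.head hne ∈ l := List.head_mem hne
    have h1 : l.head hne ∈ G.edgeSet := hsub _ hhead
    have := hsub2 h1
    exact this.2 hhead

/-- Main lemma: in a balanced graph, from any root there is a closed alternating trail
covering every edge whose endpoints are reachable from the root. -/
theorem main [Fintype V] : ∀ (n : ℕ) (G : SimpleGraph V), G.edgeSet.ncard ≤ n →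
    (∀ v, nn red G 1 v = nn red G (-1) v) → ∀ a : V,
    ∃ w : G.Walk a a, w.IsTrail ∧ AltChain red w.edges ∧
      ∀ e ∈ G.edgeSet, (∃ u ∈ e, G.Reachable a u) → e ∈ w.edges := by
  intro n
  induction n using Nat.strong_induction_on with
  | _ n ih =>
  intro G hn hbal a
  by_cases ha : ∃ x, G.Adj a x
  · obtain ⟨x, hax⟩ := ha
    obtain ⟨W, htW, hAW, hneW⟩ := exists_closed_trail hbal hax
    -- inner induction on the number of uncovered touching edges
    suffices claim : ∀ (k : ℕ) (w : G.Walk a a), w.IsTrail → AltChain red w.edges →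
        w.edges ≠ [] →
        {e | e ∈ G.edgeSet ∧ (∃ u ∈ e, G.Reachable a u) ∧ e ∉ w.edges}.ncard ≤ k →
        ∃ w' : G.Walk a a, w'.IsTrail ∧ AltChain red w'.edges ∧
          ∀ e ∈ G.edgeSet, (∃ u ∈ e, G.Reachable a u) → e ∈ w'.edges by
      exact claim _ W htW hAW hneW le_rfl
    intro k
    induction k with
    | zero =>
      intro w htw hAw hnew hcard
      refine ⟨w, htw, hAw, ?_⟩
      intro e he hto
      by_contra hmem
      have : e ∈ {e | e ∈ G.edgeSet ∧ (∃ u ∈ e, G.Reachable a u) ∧ e ∉ w.edges} :=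
        ⟨he, hto, hmem⟩
      have hpos : 0 < {e | e ∈ G.edgeSet ∧ (∃ u ∈ e, G.Reachable a u) ∧ e ∉ w.edges}.ncard :=
        (Set.ncard_pos (Set.toFinite _)).mpr ⟨e, this⟩
      omega
    | succ k ihk =>
      intro w htw hAw hnew hcard
      by_cases hcov : {e | e ∈ G.edgeSet ∧ (∃ u ∈ e, G.Reachable a u) ∧ e ∉ w.edges} = ∅
      · refine ⟨w, htw, hAw, ?_⟩
        intro e he hto
        by_contra hmem
        exact absurd hcov (Set.nonempty_iff_ne_empty.mp ⟨e, he, hto, hmem⟩)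
      · obtain ⟨e₀, he₀G, ⟨u, hue, hreach⟩, he₀w⟩ := Set.nonempty_iff_ne_empty.mpr hcov
        -- u is incident to an uncovered edge
        obtain ⟨z₀, hz₀⟩ : ∃ z, G.Adj u z ∧ s(u, z) ∉ w.edges := by
          obtain ⟨z, rfl⟩ := Sym2.mem_iff_exists.mp hue
          exact ⟨z, G.mem_edgeSet.mp he₀G, he₀w⟩
        obtain ⟨p⟩ := hreach
        obtain ⟨v, hvsup, z, hvz, hvzw⟩ :=
          find_attach w p w.start_mem_support ⟨z₀, hz₀⟩
        -- the remainder graph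
        set G' := G.deleteEdges {e | e ∈ w.edges} with hG'
        have hsubw : ∀ e ∈ w.edges, e ∈ G.edgeSet := fun e he => w.edges_subset_edgeSet he
        have hbal' : ∀ y, nn red G' 1 y = nn red G' (-1) y := by
          intro y
          have h1 := nn_delete (red := red) htw.edges_nodup hsubw 1 y
          have h2 := nn_delete (red := red) htw.edges_nodup hsubw (-1) y
          have h3 := cnt_closed_eq w hAw y
          have h4 := hbal y
          rw [← hG'] at h1 h2
          omega
        have hlt : G'.edgeSet.ncard < G.edgeSet.ncard := edgeSet_lt hnew hsubw
        obtain ⟨Wv, htWv, hAWv, hcov'⟩ :=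
          ih G'.edgeSet.ncard (by omega) G' le_rfl hbal' v
        -- Wv covers the edge s(v,z)
        have hfG' : s(v, z) ∈ G'.edgeSet := by
          rw [hG', SimpleGraph.mem_edgeSet, deleteEdges_adj]
          exact ⟨hvz, hvzw⟩
        have hfWv : s(v, z) ∈ Wv.edges := by
          apply hcov' _ hfG'
          exact ⟨v, Sym2.mem_mk_left v z, Reachable.refl v⟩
        have hnevWv : Wv.edges ≠ [] := List.ne_nil_of_mem hfWv
        -- transfer Wv from G' to G
        have hWvsub : ∀ e ∈ Wv.edges, e ∈ G.edgeSet := by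
          intro e he
          have := Wv.edges_subset_edgeSet he
          rw [hG', edgeSet_deleteEdges] at this
          exact this.1
        set WvG := Wv.transfer G hWvsub with hWvG
        have hWvGe : WvG.edges = Wv.edges := Wv.edges_transfer hWvsub
        have hdisjw : ∀ e ∈ WvG.edges, e ∉ w.edges := by
          intro e he
          rw [hWvGe] at he
          have := Wv.edges_subset_edgeSet he
          rw [hG', edgeSet_deleteEdges] at this
          exact this.2
        obtain ⟨W2, htW2, hAW2, hmemW2⟩ := splice w htw hAw hnew hvsup WvG
          ⟨by rw [hWvGe]; exact htWv.edges_nodup⟩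
          (by rw [hWvGe]; exact hAWv) (by rw [hWvGe]; exact hnevWv) hdisjw
        -- apply inner IH to W2
        apply ihk W2 htW2 hAW2
        · intro hcon
          apply hnew
          rcases hq : w.edges with _ | ⟨q, l⟩
          · rfl
          · exfalso
            have : q ∈ W2.edges := (hmemW2 q).mpr (Or.inl (by rw [hq]; simp))
            rw [hcon] at this
            simp at this
        · -- the uncovered set shrank
          have hsubset : {e | e ∈ G.edgeSet ∧ (∃ u ∈ e, G.Reachable a u) ∧ e ∉ W2.edges} ⊆
              {e | e ∈ G.edgeSet ∧ (∃ u ∈ e, G.Reachable a u) ∧ e ∉ w.edges} \ {s(v, z)} := by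
            rintro e ⟨he, hto, hmem⟩
            refine ⟨⟨he, hto, fun hc => hmem ((hmemW2 e).mpr (Or.inl hc))⟩, ?_⟩
            intro hc
            rw [Set.mem_singleton_iff] at hc
            subst hc
            exact hmem ((hmemW2 _).mpr (Or.inr (by rw [hWvGe]; exact hfWv)))
          have hfmem : s(v, z) ∈ {e | e ∈ G.edgeSet ∧ (∃ u ∈ e, G.Reachable a u) ∧
              e ∉ w.edges} := by
            refine ⟨G.mem_edgeSet.mpr hvz, ⟨v, Sym2.mem_mk_left v z, ?_⟩, hvzw⟩
            exact reachable_of_mem_support w hvsup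
          have h5 := Set.ncard_le_ncard hsubset (Set.toFinite _)
          have h6 := Set.ncard_diff_singleton_of_mem hfmem
          omega
  · -- a has no incident edge: the empty walk works
    push_neg at ha
    refine ⟨Walk.nil, ⟨by simp⟩, by simp [AltChain, List.Chain'], ?_⟩
    intro e he ⟨u, hue, hreach⟩
    exfalso
    obtain ⟨p⟩ := hreach
    cases p with
    | nil =>
      obtain ⟨z, rfl⟩ := Sym2.mem_iff_exists.mp hue
      exact ha z (G.mem_edgeSet.mp he)
    | cons h q => exact ha _ h

lemma sg_eq_one_iff {e : Sym2 V} : sg red e = 1 ↔ red e := by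
  unfold sg; split_ifs with h <;> simp [h]

lemma sg_eq_negone_iff {e : Sym2 V} : sg red e = -1 ↔ ¬ red e := by
  unfold sg; split_ifs with h <;> simp [h]

end Kz

section Top

variable [Fintype V] (R B T : SimpleGraph V)

lemma nn_T_one (hdisj : Disjoint R.edgeSet B.edgeSet) (hT : T = R ⊔ B) (v : V) :
    Kz.nn ((fun e => e ∈ R.edgeSet)) T 1 v = (R.neighborSet v).ncard := by
  have h1 : {e | e ∈ T.edgeSet ∧ v ∈ e ∧ Kz.sg ((fun e => e ∈ R.edgeSet)) e = 1} =
      (fun u => s(v, u)) '' (R.neighborSet v) := by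
    ext e
    simp only [Set.mem_setOf_eq, Set.mem_image, Kz.sg_eq_one_iff, SimpleGraph.mem_neighborSet]
    constructor
    · rintro ⟨heT, hve, heR⟩
      obtain ⟨u, rfl⟩ := Sym2.mem_iff_exists.mp hve
      exact ⟨u, R.mem_edgeSet.mp heR, rfl⟩
    · rintro ⟨u, hu, rfl⟩
      have heR : s(v, u) ∈ R.edgeSet := R.mem_edgeSet.mpr hu
      refine ⟨?_, Sym2.mem_mk_left v u, heR⟩
      rw [hT, edgeSet_sup]
      exact Or.inl heR
  rw [Kz.nn, h1, Set.ncard_image_of_injective _ (fun u u' h => Sym2.congr_right.mp h)]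

lemma nn_T_negone (hdisj : Disjoint R.edgeSet B.edgeSet) (hT : T = R ⊔ B) (v : V) :
    Kz.nn ((fun e => e ∈ R.edgeSet)) T (-1) v = (B.neighborSet v).ncard := by
  have h1 : {e | e ∈ T.edgeSet ∧ v ∈ e ∧ Kz.sg ((fun e => e ∈ R.edgeSet)) e = -1} =
      (fun u => s(v, u)) '' (B.neighborSet v) := by
    ext e
    simp only [Set.mem_setOf_eq, Set.mem_image, Kz.sg_eq_negone_iff, SimpleGraph.mem_neighborSet]
    constructor
    · rintro ⟨heT, hve, heR⟩
      have heB : e ∈ B.edgeSet := by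
        rw [hT, edgeSet_sup] at heT
        exact heT.resolve_left heR
      obtain ⟨u, rfl⟩ := Sym2.mem_iff_exists.mp hve
      exact ⟨u, B.mem_edgeSet.mp heB, rfl⟩
    · rintro ⟨u, hu, rfl⟩
      have heB : s(v, u) ∈ B.edgeSet := B.mem_edgeSet.mpr hu
      refine ⟨?_, Sym2.mem_mk_left v u, ?_⟩
      · rw [hT, edgeSet_sup]
        exact Or.inr heB
      · exact fun heR => (Set.disjoint_left.mp hdisj heR) heB
  rw [Kz.nn, h1, Set.ncard_image_of_injective _ (fun u u' h => Sym2.congr_right.mp h)]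

lemma compGraph_le (K : T.ConnectedComponent) : ∀ {u w : V}, (compGraph T K).Adj u w → T.Adj u w :=
  fun h => h.1

lemma nn_comp_eq (K : T.ConnectedComponent) {v : V} (hv : T.connectedComponentMk v = K)
    (red : Sym2 V → Prop) (s : ℤ) :
    Kz.nn red (compGraph T K) s v = Kz.nn red T s v := by
  have h1 : {e | e ∈ (compGraph T K).edgeSet ∧ v ∈ e ∧ Kz.sg red e = s} =
      {e | e ∈ T.edgeSet ∧ v ∈ e ∧ Kz.sg red e = s} := by
    ext e
    simp only [Set.mem_setOf_eq]
    constructor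
    · rintro ⟨he, hve, hsg⟩
      refine ⟨?_, hve, hsg⟩
      induction e using Sym2.ind with
      | _ x y => exact T.mem_edgeSet.mpr ((compGraph T K).mem_edgeSet.mp he).1
    · rintro ⟨he, hve, hsg⟩
      refine ⟨?_, hve, hsg⟩
      obtain ⟨u, rfl⟩ := Sym2.mem_iff_exists.mp hve
      exact (compGraph T K).mem_edgeSet.mpr ⟨T.mem_edgeSet.mp he, hv⟩
  rw [Kz.nn, h1]; rfl

lemma nn_comp_zero (K : T.ConnectedComponent) {v : V} (hv : T.connectedComponentMk v ≠ K)
    (red : Sym2 V → Prop) (s : ℤ) :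
    Kz.nn red (compGraph T K) s v = 0 := by
  rw [Kz.nn, Set.ncard_eq_zero (Set.toFinite _)]
  ext e
  simp only [Set.mem_setOf_eq, Set.mem_empty_iff_false, iff_false]
  rintro ⟨he, hve, -⟩
  obtain ⟨u, rfl⟩ := Sym2.mem_iff_exists.mp hve
  exact hv ((compGraph T K).mem_edgeSet.mp he).2

lemma comp_reach (K : T.ConnectedComponent) {a u : V} (ha : T.connectedComponentMk a = K)
    (hu : T.connectedComponentMk u = K) : (compGraph T K).Reachable a u := by
  have hr : T.Reachable a u := ConnectedComponent.exact (ha.trans hu.symm)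
  obtain ⟨p⟩ := hr
  refine ⟨p.transfer (compGraph T K) ?_⟩
  intro e he
  induction e using Sym2.ind with
  | _ x y =>
    have hadj : T.Adj x y := T.mem_edgeSet.mp (p.edges_subset_edgeSet he)
    have hx : x ∈ p.support := p.fst_mem_support_of_mem_edges he
    have hrx : T.Reachable a x := Kz.reachable_of_mem_support p hx
    have hxK : T.connectedComponentMk x = K :=
      ((ConnectedComponent.sound hrx).symm).trans ha
    exact (compGraph T K).mem_edgeSet.mpr ⟨hadj, hxK⟩

theorem stmt5' (hdisj : Disjoint R.edgeSet B.edgeSet) (hT : T = R ⊔ B) :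
    (∀ K : T.ConnectedComponent,
        IsAlternatingCircuit (compGraph T K) (fun e => e ∈ R.edgeSet)) ↔
      ∀ v : V, (R.neighborSet v).ncard = (B.neighborSet v).ncard := by
  constructor
  · intro hAC v
    set K := T.connectedComponentMk v with hK
    obtain ⟨a, w, hE, hA⟩ := hAC K
    have ht := hE.isTrail
    have hmem : ∀ e, e ∈ w.edges ↔ e ∈ (compGraph T K).edgeSet := fun e => hE.mem_edges_iff
    have hsets : ∀ s : ℤ, {e | e ∈ w.edges ∧ v ∈ e ∧ Kz.sg ((fun e => e ∈ R.edgeSet)) e = s} =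
        {e | e ∈ (compGraph T K).edgeSet ∧ v ∈ e ∧ Kz.sg ((fun e => e ∈ R.edgeSet)) e = s} := by
      intro s; ext e; rw [Set.mem_setOf_eq, Set.mem_setOf_eq, hmem]
    have h1 : Kz.nn ((fun e => e ∈ R.edgeSet)) (compGraph T K) 1 v = Kz.nn ((fun e => e ∈ R.edgeSet)) (compGraph T K) (-1) v := by
      have hc := Kz.cnt_closed_eq w hA v
      rw [Kz.cnt_eq_ncard ht.edges_nodup, Kz.cnt_eq_ncard ht.edges_nodup,
        hsets 1, hsets (-1)] at hc
      exact hc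
    rw [nn_comp_eq T K rfl ((fun e => e ∈ R.edgeSet)) 1, nn_comp_eq T K rfl ((fun e => e ∈ R.edgeSet)) (-1)] at h1
    rw [← nn_T_one R B T hdisj hT v, ← nn_T_negone R B T hdisj hT v]
    exact h1
  · intro hdeg K
    obtain ⟨a, ha⟩ := K.exists_rep
    have haK : T.connectedComponentMk a = K := ha
    have hbal : ∀ v, Kz.nn ((fun e => e ∈ R.edgeSet)) (compGraph T K) 1 v =
        Kz.nn ((fun e => e ∈ R.edgeSet)) (compGraph T K) (-1) v := by
      intro v
      by_cases hvK : T.connectedComponentMk v = K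
      · rw [nn_comp_eq T K hvK, nn_comp_eq T K hvK,
          nn_T_one R B T hdisj hT v, nn_T_negone R B T hdisj hT v]
        exact hdeg v
      · rw [nn_comp_zero T K hvK, nn_comp_zero T K hvK]
    obtain ⟨w, htw, hAw, hcov⟩ :=
      Kz.main (red := (fun e => e ∈ R.edgeSet)) ((compGraph T K).edgeSet.ncard) (compGraph T K) le_rfl hbal a
    refine ⟨a, w, ?_, hAw⟩
    apply htw.isEulerian_of_forall_mem
    intro e he
    apply hcov e he
    induction e using Sym2.ind with
    | _ x y =>
      have hadj := (compGraph T K).mem_edgeSet.mp he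
      exact ⟨x, Sym2.mem_mk_left x y, comp_reach T K haK hadj.2⟩

end Top

end Kotzig

theorem stmt5 {V : Type*} [Fintype V] (R B T : SimpleGraph V)
    (hdisj : Disjoint R.edgeSet B.edgeSet) (hT : T = R ⊔ B) :
    (∀ K : T.ConnectedComponent,
        IsAlternatingCircuit (compGraph T K) (fun e => e ∈ R.edgeSet)) ↔
      ∀ v : V, (R.neighborSet v).ncard = (B.neighborSet v).ncard := by
  exact stmt5' R B T hdisj hT
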